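/- Let h ∈ H_{(d)} with ‖h‖ = 1 and let ζ ∈ ℂ^{n+1} be a unit vector with h(ζ) = 0 and Dh(ζ)|_{ζ^⊥} invertible. If ḣ ∈ H_{(d)} and ζ̇ ∈ ℂ^{n+1} satisfy ⟨ζ̇, ζ⟩ = 0 and ḣ(ζ) + Dh(ζ)ζ̇ = 0 (i.e. (ḣ, ζ̇) is a tangent vector to the solution variety {(h,ζ) : h(ζ)=0} at (h,ζ)), then ‖ζ̇‖ ≤ μ(h,ζ)·‖ḣ‖. -/

import Mathlib

noncomputable section

open MvPolynomial Finset Metric MeasureTheory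

/-- `ℂ^m` with its Hermitian (ℓ²) structure. -/
abbrev Euc (m : ℕ) : Type := EuclideanSpace ℂ (Fin m)

/-- A system of `n` polynomials in the `n+1` variables `x_0, …, x_n`. -/
abbrev PolySys (n : ℕ) : Type := Fin n → MvPolynomial (Fin (n + 1)) ℂ

/-- `h` belongs to `H_(d)`: each `h i` is homogeneous of degree `d i`. -/
def IsDegSys {n : ℕ} (d : Fin n → ℕ) (h : PolySys n) : Prop :=
  ∀ i, (h i).IsHomogeneous (d i)

/-- The Bombieri–Weyl inner product of two degree-`s` forms:
`⟨∑ a_α x^α, ∑ b_α x^α⟩ = ∑ (α_0!⋯α_n!/s!)·a_α·conj(b_α)`. -/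
def BWinner {n : ℕ} (s : ℕ) (p q : MvPolynomial (Fin (n + 1)) ℂ) : ℂ :=
  ∑ α ∈ p.support ∪ q.support,
    ((∏ j, ((α j).factorial : ℂ)) / (s.factorial : ℂ)) * p.coeff α * (starRingEnd ℂ) (q.coeff α)

/-- The Bombieri–Weyl inner product of two systems in `H_(d)`. -/
def BWsysInner {n : ℕ} (d : Fin n → ℕ) (h g : PolySys n) : ℂ :=
  ∑ i, BWinner (d i) (h i) (g i)

/-- The Bombieri–Weyl norm of a system. -/
def BWnorm {n : ℕ} (d : Fin n → ℕ) (h : PolySys n) : ℝ :=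
  Real.sqrt (BWsysInner d h h).re

/-- Evaluation map of a system, as a map `ℂ^{n+1} → ℂ^n`. -/
def evalSys {n : ℕ} (h : PolySys n) (x : Euc (n + 1)) : Euc n :=
  WithLp.toLp 2 (fun i => MvPolynomial.eval (fun j => x j) (h i))

/-- Jacobian matrix of a system at a point. -/
def jacMat {n : ℕ} (h : PolySys n) (ζ : Euc (n + 1)) : Matrix (Fin n) (Fin (n + 1)) ℂ :=
  Matrix.of fun i j => MvPolynomial.eval (fun k => ζ k) (MvPolynomial.pderiv j (h i))

/-- The derivative `Dh(ζ) : ℂ^{n+1} → ℂ^n` of a system at a point. -/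
def Dsys {n : ℕ} (h : PolySys n) (ζ : Euc (n + 1)) : Euc (n + 1) →L[ℂ] Euc n :=
  LinearMap.toContinuousLinearMap (Matrix.toEuclideanLin (jacMat h ζ))

/-- The restriction `Dh(ζ)|_{ζ^⊥}` of the derivative to the orthogonal complement of `ζ`. -/
def Dperp {n : ℕ} (h : PolySys n) (ζ : Euc (n + 1)) : (ℂ ∙ ζ)ᗮ →L[ℂ] Euc n :=
  (Dsys h ζ).comp (Submodule.subtypeL (ℂ ∙ ζ)ᗮ)

/-- Invertibility of `Dh(ζ)|_{ζ^⊥}`. -/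
def DperpInvertible {n : ℕ} (h : PolySys n) (ζ : Euc (n + 1)) : Prop :=
  ∃ e : ((ℂ ∙ ζ)ᗮ ≃L[ℂ] Euc n), (e : (ℂ ∙ ζ)ᗮ →L[ℂ] Euc n) = Dperp h ζ

/-- The diagonal map `Diag(d_1^{1/2},…,d_n^{1/2})` on `ℂ^n`. -/
def diagSqrtDeg {n : ℕ} (d : Fin n → ℕ) : Euc n →L[ℂ] Euc n :=
  LinearMap.toContinuousLinearMap
    (Matrix.toEuclideanLin (Matrix.diagonal fun i => ((Real.sqrt (d i) : ℝ) : ℂ)))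

/-- The normalized condition number `μ(h,ζ) = ‖h‖·‖(Dh(ζ)|_{ζ^⊥})^{-1}∘Diag(√d_i)‖`
(`ContinuousLinearMap.inverse` yields the junk value `0` when `Dh(ζ)|_{ζ^⊥}` is not
invertible, in which case the true value is `+∞`; we only use `muCond` where invertibility
holds). -/
def muCond {n : ℕ} (d : Fin n → ℕ) (h : PolySys n) (ζ : Euc (n + 1)) : ℝ :=
  BWnorm d h * ‖((Dperp h ζ).inverse).comp (diagSqrtDeg d)‖

/-- The discriminant `Σ`: systems having a nonzero zero at which the restricted derivative is
not invertible. -/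
def InDiscrim {n : ℕ} (h : PolySys n) : Prop :=
  ∃ ζ : Euc (n + 1), ζ ≠ 0 ∧ evalSys h ζ = 0 ∧ ¬ DperpInvertible h ζ

lemma bwre {n s : ℕ} (p : MvPolynomial (Fin (n+1)) ℂ) :
    (BWinner s p p).re = ∑ α ∈ p.support,
      ((∏ j, ((α j).factorial : ℝ)) / (s.factorial : ℝ)) * Complex.normSq (p.coeff α) := by
  unfold BWinner
  rw [Finset.union_self, Complex.re_sum]
  refine Finset.sum_congr rfl fun α _ => ?_
  rw [mul_assoc, Complex.mul_conj]
  have h : ((∏ j, (((α j).factorial : ℕ) : ℂ)) / ((s.factorial : ℕ) : ℂ))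
      = ((((∏ j, (((α j).factorial : ℕ) : ℝ)) / ((s.factorial : ℕ) : ℝ)) : ℝ) : ℂ) := by
    push_cast; ring
  rw [h, ← Complex.ofReal_mul, Complex.ofReal_re]

lemma bwre_nonneg {n s : ℕ} (p : MvPolynomial (Fin (n+1)) ℂ) : 0 ≤ (BWinner s p p).re := by
  rw [bwre]
  refine Finset.sum_nonneg fun α _ => mul_nonneg (by positivity) (Complex.normSq_nonneg _)

lemma eval_abs_le {n s : ℕ} (p : MvPolynomial (Fin (n+1)) ℂ) (hp : p.IsHomogeneous s)
    (ζ : Euc (n+1)) (hζ : ‖ζ‖ = 1) :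
    ‖MvPolynomial.eval (fun j => ζ j) p‖ ≤ Real.sqrt (BWinner s p p).re := by
  set c : (Fin (n+1) →₀ ℕ) → ℝ := fun α => (∏ j, ((α j).factorial : ℝ)) / (s.factorial : ℝ)
    with hcdef
  have hcpos : ∀ α, 0 < c α := fun α => by
    apply div_pos
    · exact Finset.prod_pos fun j _ => by exact_mod_cast (α j).factorial_pos
    · exact_mod_cast s.factorial_pos
  have h1 : ‖MvPolynomial.eval (fun j => ζ j) p‖
      ≤ ∑ α ∈ p.support, ‖p.coeff α‖ * ∏ j, ‖ζ j‖ ^ (α j) := by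
    rw [MvPolynomial.eval_eq']
    refine (norm_sum_le _ _).trans_eq ?_
    refine Finset.sum_congr rfl fun α _ => ?_
    rw [norm_mul, norm_prod]
    simp [norm_pow]
  set F : (Fin (n+1) →₀ ℕ) → ℝ := fun α => Real.sqrt (c α) * ‖p.coeff α‖ with hF
  set G : (Fin (n+1) →₀ ℕ) → ℝ :=
    fun α => (Real.sqrt (c α))⁻¹ * ∏ j, ‖ζ j‖ ^ (α j) with hG
  have hsq : ∀ α, Real.sqrt (c α) ≠ 0 := fun α => Real.sqrt_ne_zero'.mpr (hcpos α)
  have hFG : ∀ α, ‖p.coeff α‖ * ∏ j, ‖ζ j‖ ^ (α j) = F α * G α := by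
    intro α
    rw [hF, hG]
    field_simp
    rw [mul_div_cancel_right₀ _ (hsq α)]
  -- sum of squares of G over support is ≤ 1
  have hζsum : ∑ j, ‖ζ j‖ ^ 2 = 1 := by
    have h3 : ∑ j, ‖ζ j‖ ^ 2 = 1 := by
      rw [EuclideanSpace.norm_eq, Real.sqrt_eq_one] at hζ
      exact hζ
    simpa using h3
  set T : (Fin (n+1) → ℕ) → ℝ :=
    fun k => (Nat.multinomial Finset.univ k : ℝ) * ∏ j, (‖ζ j‖ ^ 2) ^ (k j) with hT
  have hGT : ∀ α ∈ p.support, G α ^ 2 = T ⇑α := by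
    intro α hα
    have hdeg : ∑ j, α j = s := by
      have h0 := hp (MvPolynomial.mem_support_iff.mp hα)
      rw [show (1 : Fin (n+1) → ℕ) = fun _ => 1 from rfl, ← Finsupp.degree_eq_weight_one] at h0
      rw [← h0, Finsupp.degree]
      exact (Finset.sum_subset (Finset.subset_univ _)
        (fun j _ hj => Finsupp.notMem_support_iff.mp hj)).symm
    have hnat : (∏ j, (α j).factorial) * Nat.multinomial Finset.univ ⇑α = s.factorial := by
      rw [Nat.multinomial_spec, hdeg]
    have hcinv : (c α)⁻¹ = (Nat.multinomial Finset.univ ⇑α : ℝ) := by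
      rw [hcdef, inv_div, eq_comm, eq_div_iff (by positivity)]
      rw [mul_comm]
      exact_mod_cast hnat
    rw [hG, hT, mul_pow, ← Real.sqrt_inv, Real.sq_sqrt (by positivity), hcinv]
    congr 1
    rw [← Finset.prod_pow]
    exact Finset.prod_congr rfl fun j _ => by rw [← pow_mul, ← pow_mul, mul_comm]
  have hGsum : ∑ α ∈ p.support, G α ^ 2 ≤ 1 := by
    calc ∑ α ∈ p.support, G α ^ 2 = ∑ α ∈ p.support, T ⇑α := Finset.sum_congr rfl hGT
      _ = ∑ k ∈ p.support.image (⇑· : (Fin (n+1) →₀ ℕ) → (Fin (n+1) → ℕ)), T k := by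
          rw [Finset.sum_image]
          intro a _ b _ hab
          exact (DFunLike.coe_injective (F := Fin (n+1) →₀ ℕ)) hab
      _ ≤ ∑ k ∈ Finset.piAntidiag Finset.univ s, T k := by
          apply Finset.sum_le_sum_of_subset_of_nonneg
          · intro k hk
            obtain ⟨α, hα, rfl⟩ := Finset.mem_image.mp hk
            rw [Finset.mem_piAntidiag]
            refine ⟨?_, fun i _ => Finset.mem_univ i⟩
            have h0 := hp (MvPolynomial.mem_support_iff.mp hα)
            rw [show (1 : Fin (n+1) → ℕ) = fun _ => 1 from rfl, ← Finsupp.degree_eq_weight_one] at h0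
            rw [← h0, Finsupp.degree]
            exact (Finset.sum_subset (Finset.subset_univ _)
              (fun j _ hj => Finsupp.notMem_support_iff.mp hj)).symm
          · intro k _ _
            positivity
      _ = (∑ j, ‖ζ j‖ ^ 2) ^ s := (Finset.sum_pow_eq_sum_piAntidiag _ _ _).symm
      _ = 1 := by rw [hζsum, one_pow]
  have hFsum : ∑ α ∈ p.support, F α ^ 2 = (BWinner s p p).re := by
    rw [bwre]
    refine Finset.sum_congr rfl fun α _ => ?_
    rw [hF, mul_pow, Real.sq_sqrt (hcpos α).le, Complex.sq_norm]
  have hcs := Finset.sum_mul_sq_le_sq_mul_sq p.support F G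
  have hFGnn : 0 ≤ ∑ α ∈ p.support, F α * G α :=
    Finset.sum_nonneg fun α _ => mul_nonneg (by positivity)
      (mul_nonneg (by positivity) (Finset.prod_nonneg fun j _ => by positivity))
  have h2 : (∑ α ∈ p.support, F α * G α) ^ 2 ≤ (BWinner s p p).re := by
    calc (∑ α ∈ p.support, F α * G α) ^ 2
        ≤ (∑ α ∈ p.support, F α ^ 2) * ∑ α ∈ p.support, G α ^ 2 := hcs
      _ ≤ (∑ α ∈ p.support, F α ^ 2) * 1 := by
          apply mul_le_mul_of_nonneg_left hGsum
          exact Finset.sum_nonneg fun α _ => sq_nonneg _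
      _ = (BWinner s p p).re := by rw [mul_one, hFsum]
  calc ‖MvPolynomial.eval (fun j => ζ j) p‖
      ≤ ∑ α ∈ p.support, ‖p.coeff α‖ * ∏ j, ‖ζ j‖ ^ (α j) := h1
    _ = ∑ α ∈ p.support, F α * G α := Finset.sum_congr rfl fun α _ => hFG α
    _ ≤ Real.sqrt (BWinner s p p).re := by
        rw [← Real.sqrt_sq hFGnn]
        exact Real.sqrt_le_sqrt h2

/-- **The condition number bounds the implicit function of the solution variety**:
if `(ḣ, ζ̇)` is tangent to the solution variety `{(h,ζ) : h(ζ) = 0}` at `(h,ζ)`, i.e.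
`⟨ζ̇,ζ⟩ = 0` and `ḣ(ζ) + Dh(ζ)ζ̇ = 0`, with `‖h‖ = 1`, `‖ζ‖ = 1`, `h(ζ) = 0` and
`Dh(ζ)|_{ζ^⊥}` invertible, then `‖ζ̇‖ ≤ μ(h,ζ)·‖ḣ‖`. -/
theorem norm_zetadot_le_mu_mul_norm_hdot {n : ℕ} (hn : 1 ≤ n)
    (d : Fin n → ℕ) (hd : ∀ i, 1 ≤ d i)
    (h : PolySys n) (hdeg : IsDegSys d h) (hnorm : BWnorm d h = 1)
    (ζ : Euc (n + 1)) (hζ : ‖ζ‖ = 1) (hz : evalSys h ζ = 0)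
    (hinv : DperpInvertible h ζ)
    (hdot : PolySys n) (hdotdeg : IsDegSys d hdot)
    (ζdot : Euc (n + 1)) (horth : (inner ℂ ζdot ζ : ℂ) = 0)
    (htangent : evalSys hdot ζ + Dsys h ζ ζdot = 0) :
    ‖ζdot‖ ≤ muCond d h ζ * BWnorm d hdot := by
  obtain ⟨e, he⟩ := hinv
  have hmem : ζdot ∈ (ℂ ∙ ζ)ᗮ :=
    Submodule.mem_orthogonal_singleton_iff_inner_left.mpr horth
  set v : ((ℂ ∙ ζ)ᗮ : Submodule ℂ (Euc (n+1))) := ⟨ζdot, hmem⟩ with hvdef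
  set w : Euc n := evalSys hdot ζ with hwdef
  have hDv : Dsys h ζ ζdot = -w := by
    rw [eq_neg_iff_add_eq_zero, add_comm]
    exact htangent
  -- u with diagSqrtDeg d u = w
  have hdpos : ∀ i, (0:ℝ) < Real.sqrt (d i) :=
    fun i => Real.sqrt_pos.mpr (by exact_mod_cast Nat.lt_of_lt_of_le Nat.zero_lt_one (hd i))
  set u : Euc n := WithLp.toLp 2 (fun i => w i / ((Real.sqrt (d i) : ℝ) : ℂ)) with hudef
  have hdu : diagSqrtDeg d u = w := by
    ext i
    show (Matrix.toEuclideanLin (Matrix.diagonal fun i => ((Real.sqrt (d i) : ℝ) : ℂ))) u i = w i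
    simp only [Matrix.toEuclideanLin_apply, PiLp.toLp_apply, Matrix.mulVec_diagonal]
    rw [hudef]
    exact mul_div_cancel₀ _ (by exact_mod_cast (hdpos i).ne')
  set A : Euc n →L[ℂ] ((ℂ ∙ ζ)ᗮ : Submodule ℂ (Euc (n+1))) :=
    ((Dperp h ζ).inverse).comp (diagSqrtDeg d) with hA
  have hAinv : (Dperp h ζ).inverse = (e.symm : Euc n →L[ℂ] ((ℂ ∙ ζ)ᗮ : Submodule ℂ (Euc (n+1)))) := by
    rw [← he, ContinuousLinearMap.inverse_equiv]
  have hev : e v = -w := by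
    have : (e : ((ℂ ∙ ζ)ᗮ : Submodule ℂ (Euc (n+1))) →L[ℂ] Euc n) v = Dperp h ζ v := by rw [he]
    rw [ContinuousLinearEquiv.coe_coe] at this
    rw [this]
    calc Dperp h ζ v = Dsys h ζ ζdot := rfl
      _ = -w := hDv
  have hvA : v = -(A u) := by
    rw [hA, ContinuousLinearMap.comp_apply, hAinv, hdu]
    apply e.injective
    rw [hev, map_neg]
    congr 1
    exact (e.apply_symm_apply w).symm
  -- the eval bound
  have hub : ‖u‖ ≤ BWnorm d hdot := by
    rw [EuclideanSpace.norm_eq, BWnorm]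
    have hre : (BWsysInner d hdot hdot).re = ∑ i, (BWinner (d i) (hdot i) (hdot i)).re := by
      rw [BWsysInner, Complex.re_sum]
    rw [hre]
    apply Real.sqrt_le_sqrt
    apply Finset.sum_le_sum
    intro i _
    have key := eval_abs_le (hdot i) (hdotdeg i) ζ hζ
    have hwabs : ‖w i‖ ≤ Real.sqrt (BWinner (d i) (hdot i) (hdot i)).re := by
      rw [hwdef]
      simpa [evalSys] using key
    have hui : ‖u i‖ = ‖w i‖ / Real.sqrt (d i) := by
      rw [hudef]
      simp [norm_div, Complex.norm_real, abs_of_pos (hdpos i)]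
    rw [hui]
    have h1 : ‖w i‖ / Real.sqrt (d i) ≤ ‖w i‖ := by
      apply div_le_self (norm_nonneg _)
      rw [show (1:ℝ) = Real.sqrt 1 by simp]
      exact Real.sqrt_le_sqrt (by exact_mod_cast hd i)
    calc (‖w i‖ / Real.sqrt (d i)) ^ 2 ≤ ‖w i‖ ^ 2 := by
          apply pow_le_pow_left₀ (by positivity) h1
      _ ≤ (Real.sqrt (BWinner (d i) (hdot i) (hdot i)).re) ^ 2 := by
          apply pow_le_pow_left₀ (norm_nonneg _) hwabs
      _ = (BWinner (d i) (hdot i) (hdot i)).re := Real.sq_sqrt (bwre_nonneg _)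
  calc ‖ζdot‖ = ‖v‖ := rfl
    _ = ‖A u‖ := by rw [hvA, norm_neg]
    _ ≤ ‖A‖ * ‖u‖ := A.le_opNorm u
    _ ≤ ‖A‖ * BWnorm d hdot := by
        have hA0 : (0:ℝ) ≤ ‖A‖ := norm_nonneg A
        exact mul_le_mul_of_nonneg_left hub hA0
    _ = muCond d h ζ * BWnorm d hdot := by
        rw [muCond, hnorm, one_mul, hA]


end
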